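/- If C is a complete admissible clutter, then C is unmixed, i.e., all minimal vertex covers of C have the same cardinality. -/

import Mathlib

variable {V : Type} [Fintype V] [DecidableEq V]

/-- A clutter: a family of finsets (edges), none of which contains another. -/
def IsClutter (E : Set (Finset V)) : Prop :=
  ∀ e ∈ E, ∀ f ∈ E, e ⊆ f → e = f

/-- A vertex cover: a set of vertices meeting every edge. -/
def IsVertexCover (E : Set (Finset V)) (C : Finset V) : Prop :=
  ∀ e ∈ E, (e ∩ C).Nonempty

/-- A minimal vertex cover. -/
def IsMinimalVertexCover (E : Set (Finset V)) (C : Finset V) : Prop :=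
  IsVertexCover E C ∧ ∀ D ⊂ C, ¬ IsVertexCover E D

/-- The covering number: minimum cardinality of a vertex cover. -/
noncomputable def coveringNumber (E : Set (Finset V)) : ℕ :=
  sInf {n : ℕ | ∃ C : Finset V, IsVertexCover E C ∧ C.card = n}

/-- Unmixed: all minimal vertex covers have the same cardinality. -/
def Unmixed (E : Set (Finset V)) : Prop :=
  ∀ C D : Finset V, IsMinimalVertexCover E C → IsMinimalVertexCover E D →
    C.card = D.card

/-- A matching: a set of pairwise disjoint edges. -/
def IsMatching (E : Set (Finset V)) (M : Finset (Finset V)) : Prop :=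
  ↑M ⊆ E ∧ (M : Set (Finset V)).Pairwise Disjoint

/-- The König property: the maximum size of a matching equals the covering number. -/
def HasKonigProperty (E : Set (Finset V)) : Prop :=
  (∃ M : Finset (Finset V), IsMatching E M ∧ M.card = coveringNumber E) ∧
  ∀ M : Finset (Finset V), IsMatching E M → M.card ≤ coveringNumber E

/-- A perfect matching of König type: pairwise disjoint edges `em 0, …, em (g-1)`
whose union is the whole vertex set, where `g` is the covering number. -/
def IsPerfectMatchingKT (E : Set (Finset V)) {g : ℕ} (em : Fin g → Finset V) : Prop :=
  (∀ i, em i ∈ E) ∧ (∀ i j, i ≠ j → Disjoint (em i) (em j)) ∧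
  (∀ x : V, ∃ i, x ∈ em i) ∧ g = coveringNumber E

/-- An independent set: contains no edge. -/
def IsIndependentSet (E : Set (Finset V)) (F : Finset V) : Prop :=
  ∀ e ∈ E, ¬ e ⊆ F

/-- A facet of the independence complex: a maximal independent set. -/
def IsFacet (E : Set (Finset V)) (F : Finset V) : Prop :=
  IsIndependentSet E F ∧ ∀ G : Finset V, IsIndependentSet E G → F ⊆ G → F = G

/-- The set of facets of the independence complex of a clutter. -/
def cFacets (E : Set (Finset V)) : Set (Finset V) := {F | IsFacet E F}

/-- `F : Fin s → Finset V` is a shelling order of the family of facets `Fac`. -/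
def IsShelling {s : ℕ} (Fac : Set (Finset V)) (F : Fin s → Finset V) : Prop :=
  Function.Injective F ∧ (∀ G : Finset V, G ∈ Fac ↔ ∃ i, F i = G) ∧
  ∀ i j : Fin s, i < j →
    ∃ v ∈ F j \ F i, ∃ l : Fin s, l < j ∧ F j \ F l = {v}

/-- A family of facets is shellable if it admits a shelling order. -/
def Shellable (Fac : Set (Finset V)) : Prop :=
  ∃ (s : ℕ) (F : Fin s → Finset V), IsShelling Fac F

/-- A family of facets is pure if all its members have the same cardinality. -/
def PureFamily (Fac : Set (Finset V)) : Prop :=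
  ∀ F ∈ Fac, ∀ G ∈ Fac, F.card = G.card

/-- Pure shellable: pure and shellable. -/
def PureShellable (Fac : Set (Finset V)) : Prop :=
  PureFamily Fac ∧ Shellable Fac

/-- A free vertex: a vertex belonging to exactly one edge. -/
def HasFreeVertex (E : Set (Finset V)) : Prop :=
  ∃ x : V, ∃ e ∈ E, x ∈ e ∧ ∀ f ∈ E, x ∈ f → f = e

/-- A cycle of length `r`: `r` distinct vertices and `r` distinct edges such that each
of the vertices lies in exactly two of the edges and each of the edges contains exactly
two of the vertices. -/
def HasCycleOfLength (E : Set (Finset V)) (r : ℕ) : Prop :=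
  ∃ (v : Fin r → V) (f : Fin r → Finset V),
    Function.Injective v ∧ Function.Injective f ∧ (∀ j, f j ∈ E) ∧
    (∀ i : Fin r, (Finset.univ.filter (fun j => v i ∈ f j)).card = 2) ∧
    (∀ j : Fin r, (Finset.univ.filter (fun i => v i ∈ f j)).card = 2)

/-- A partition of the vertex set into finsets indexed by `Fin m`. -/
def IsPartitionF {m : ℕ} (P : Fin m → Finset V) : Prop :=
  (∀ i j, i ≠ j → Disjoint (P i) (P j)) ∧ ∀ x : V, ∃ i, x ∈ P i

/-- An admissible set with respect to the color classes `Xc 0, …, Xc (d-1)` and the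
matching classes `em 0, …, em (g-1)`: it meets each color class at most once, it meets
precisely the first `e.card` color classes, and the matching indices of its vertices
are nondecreasing along the color classes. -/
def IsAdmissibleSet {d g : ℕ} (Xc : Fin d → Finset V) (em : Fin g → Finset V)
    (e : Finset V) : Prop :=
  (∀ i, (e ∩ Xc i).card ≤ 1) ∧
  (∀ i : Fin d, ((i : ℕ) < e.card ↔ (e ∩ Xc i).Nonempty)) ∧
  (∀ (i i' : Fin d) (j j' : Fin g) (x y : V),
    x ∈ e ∩ Xc i → y ∈ e ∩ Xc i' → x ∈ em j → y ∈ em j' → i ≤ i' → j ≤ j')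

/-- An admissible clutter: the `em i` are admissible edges and all other edges are
admissible sets not contained in any `em i`. -/
def IsAdmissibleClutter {d g : ℕ} (Xc : Fin d → Finset V) (em : Fin g → Finset V)
    (E : Set (Finset V)) : Prop :=
  IsClutter E ∧ (∀ i, em i ∈ E) ∧ (∀ i, IsAdmissibleSet Xc em (em i)) ∧
  ∀ f ∈ E, (∀ i, f ≠ em i) → IsAdmissibleSet Xc em f ∧ ∀ i, ¬ f ⊆ em i

/-- The complete admissible clutter: the `em i` together with all maximal admissible
sets containing no `em i`. -/
def completeAdmissibleClutter {d g : ℕ} (Xc : Fin d → Finset V)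
    (em : Fin g → Finset V) : Set (Finset V) :=
  Set.range em ∪
    {e | IsAdmissibleSet Xc em e ∧ (∀ i, ¬ em i ⊆ e) ∧
      ∀ e', IsAdmissibleSet Xc em e' → e ⊆ e' → e = e'}

/-- The edge set of the complete admissible uniform clutter: all maximal admissible
sets. -/
def maxAdmissible {d g : ℕ} (Xc : Fin d → Finset V)
    (em : Fin g → Finset V) : Set (Finset V) :=
  {e | IsAdmissibleSet Xc em e ∧ ∀ e', IsAdmissibleSet Xc em e' → e ⊆ e' → e = e'}


lemma partF_unique {m : ℕ} {P : Fin m → Finset V} (hP : IsPartitionF P)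
    {v : V} {i j : Fin m} (hi : v ∈ P i) (hj : v ∈ P j) : i = j := by
  by_contra h
  exact Finset.disjoint_left.mp (hP.1 i j h) hi hj

lemma card_eq_sum_partsF {m : ℕ} {P : Fin m → Finset V} (hP : IsPartitionF P)
    (S : Finset V) : S.card = ∑ i, (S ∩ P i).card := by
  classical
  have hS : S = Finset.univ.biUnion (fun i => S ∩ P i) := by
    ext v
    simp only [Finset.mem_biUnion, Finset.mem_univ, true_and, Finset.mem_inter]
    constructor
    · intro hv
      obtain ⟨i, hi⟩ := hP.2 v
      exact ⟨i, hv, hi⟩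
    · rintro ⟨i, hv, _⟩
      exact hv
  have hdisj : ∀ i ∈ Finset.univ, ∀ j ∈ Finset.univ, i ≠ j →
      Disjoint (S ∩ P i) (S ∩ P j) := by
    intro i _ j _ hij
    refine Finset.disjoint_left.mpr fun {v} h1 h2 => ?_
    exact Finset.disjoint_left.mp (hP.1 i j hij) (Finset.mem_inter.mp h1).2
      (Finset.mem_inter.mp h2).2
  calc S.card = (Finset.univ.biUnion (fun i => S ∩ P i)).card := by rw [← hS]
    _ = ∑ i, (S ∩ P i).card := Finset.card_biUnion hdisj

lemma adm_card_le {d g : ℕ} {Xc : Fin d → Finset V} {em : Fin g → Finset V}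
    (hXc : IsPartitionF Xc) {e : Finset V} (he : IsAdmissibleSet Xc em e) :
    e.card ≤ d := by
  rw [card_eq_sum_partsF hXc e]
  calc ∑ i, (e ∩ Xc i).card ≤ ∑ _i : Fin d, 1 :=
        Finset.sum_le_sum (fun i _ => he.1 i)
    _ = d := by simp

lemma adm_inter_card_one {d g : ℕ} {Xc : Fin d → Finset V} {em : Fin g → Finset V}
    {e : Finset V} (he : IsAdmissibleSet Xc em e) {c : Fin d}
    (hc : (c : ℕ) < e.card) : (e ∩ Xc c).card = 1 :=
  le_antisymm (he.1 c) (Finset.card_pos.mpr ((he.2.1 c).mp hc))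

lemma cover_witness {E : Set (Finset V)} {C : Finset V}
    (hC : IsMinimalVertexCover E C) {z : V} (hz : z ∈ C) :
    ∃ f ∈ E, z ∈ f ∧ ∀ w ∈ f, w ∈ C → w = z := by
  have h1 := hC.2 (C.erase z) (Finset.erase_ssubset hz)
  rw [IsVertexCover] at h1
  push_neg at h1
  obtain ⟨f, hfE, hf⟩ := h1
  try rw [Finset.not_nonempty_iff_eq_empty] at hf
  have key : ∀ w ∈ f, w ∈ C → w = z := by
    intro v hv hvC
    by_contra hne
    have hmem : v ∈ f ∩ C.erase z :=
      Finset.mem_inter.mpr ⟨hv, Finset.mem_erase.mpr ⟨hne, hvC⟩⟩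
    rw [hf] at hmem
    exact absurd hmem (Finset.notMem_empty v)
  obtain ⟨w, hw⟩ := hC.1 f hfE
  rw [Finset.mem_inter] at hw
  exact ⟨f, hfE, (key w hw.1 hw.2) ▸ hw.1, key⟩

lemma cac_inter_card_le_one {d g : ℕ} {Xc : Fin d → Finset V} {em : Fin g → Finset V}
    (hXc : IsPartitionF Xc) (hem : IsPartitionF em)
    (hadm : ∀ i, IsAdmissibleSet Xc em (em i))
    {C : Finset V} (hC : IsMinimalVertexCover (completeAdmissibleClutter Xc em) C)
    (i : Fin g) : (C ∩ em i).card ≤ 1 := by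
  classical
  choose colf hcolf using hXc.2
  have hcol_eq : ∀ {v : V} {c : Fin d}, v ∈ Xc c → colf v = c :=
    fun hv => partF_unique hXc (hcolf _) hv
  by_contra hcard
  rw [not_le] at hcard
  -- main argument, for x of smaller colour class than y
  have main : ∀ (x y : V) (a b : Fin d), x ∈ C → x ∈ em i → y ∈ C → y ∈ em i →
      x ∈ Xc a → y ∈ Xc b → a < b → False := by
    intro x y a b hxC hxi hyC hyi hxa hyb hab
    have hxy : x ≠ y := fun hxyeq =>
      absurd (partF_unique hXc (hxyeq ▸ hxa) hyb) (ne_of_lt hab)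
    obtain ⟨fx, hfxE, hxfx, hfxC⟩ := cover_witness hC hxC
    obtain ⟨fy, hfyE, hyfy, hfyC⟩ := cover_witness hC hyC
    -- fx is a maximal admissible edge
    have hfxpack : IsAdmissibleSet Xc em fx ∧ (∀ j, ¬ em j ⊆ fx) ∧
        ∀ e', IsAdmissibleSet Xc em e' → fx ⊆ e' → fx = e' := by
      rcases hfxE with h | h
      · exfalso
        obtain ⟨j, hj⟩ := h
        have hji : j = i := partF_unique hem (hj ▸ hxfx) hxi
        have : y ∈ fx := by rw [← hj, hji]; exact hyi
        exact hxy (hfxC y this hyC).symm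
      · exact h
    have hfypack : IsAdmissibleSet Xc em fy := by
      rcases hfyE with h | h
      · exfalso
        obtain ⟨j, hj⟩ := h
        have hji : j = i := partF_unique hem (hj ▸ hyfy) hyi
        have : x ∈ fy := by rw [← hj, hji]; exact hxi
        exact hxy (hfyC x this hxC)
      · exact h.1
    obtain ⟨admx, hnocolx, hmaxx⟩ := hfxpack
    have admy := hfypack
    have hax : (a : ℕ) < fx.card := (admx.2.1 a).mpr ⟨x, Finset.mem_inter.mpr ⟨hxfx, hxa⟩⟩
    have hby : (b : ℕ) < fy.card := (admy.2.1 b).mpr ⟨y, Finset.mem_inter.mpr ⟨hyfy, hyb⟩⟩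
    have hbei : (b : ℕ) < (em i).card :=
      ((hadm i).2.1 b).mpr ⟨y, Finset.mem_inter.mpr ⟨hyi, hyb⟩⟩
    have habn : (a : ℕ) < (b : ℕ) := hab
    set c1 : Fin d := ⟨(a : ℕ) + 1, by omega⟩ with hc1
    obtain ⟨z, hz⟩ := ((hadm i).2.1 c1).mp (by simp only [hc1]; omega)
    rw [Finset.mem_inter] at hz
    -- fx has cardinality at least a + 2
    have hfx2 : (a : ℕ) + 2 ≤ fx.card := by
      by_contra hcon
      have hcardfx : fx.card = (a : ℕ) + 1 := by omega
      have hzfx : z ∉ fx := by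
        intro hzin
        have : (c1 : ℕ) < fx.card :=
          (admx.2.1 c1).mpr ⟨z, Finset.mem_inter.mpr ⟨hzin, hz.2⟩⟩
        simp only [hc1] at this
        omega
      set f' := insert z fx with hf'
      have hf'card : f'.card = (a : ℕ) + 2 := by
        rw [hf', Finset.card_insert_of_notMem hzfx, hcardfx]
      have hf'adm : IsAdmissibleSet Xc em f' := by
        refine ⟨?_, ?_, ?_⟩
        · intro c
          rw [Finset.card_le_one]
          intro u hu w hw
          rw [Finset.mem_inter, hf', Finset.mem_insert] at hu hw
          rcases hu.1 with hu1 | hu1 <;> rcases hw.1 with hw1 | hw1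
          · rw [hu1, hw1]
          · exfalso
            have hcc1 : c = c1 := partF_unique hXc (hu1 ▸ hu.2) hz.2
            have : (c : ℕ) < fx.card :=
              (admx.2.1 c).mpr ⟨w, Finset.mem_inter.mpr ⟨hw1, hw.2⟩⟩
            rw [hcc1] at this
            simp only [hc1] at this
            omega
          · exfalso
            have hcc1 : c = c1 := partF_unique hXc (hw1 ▸ hw.2) hz.2
            have : (c : ℕ) < fx.card :=
              (admx.2.1 c).mpr ⟨u, Finset.mem_inter.mpr ⟨hu1, hu.2⟩⟩
            rw [hcc1] at this
            simp only [hc1] at this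
            omega
          · exact Finset.card_le_one.mp (admx.1 c) u
              (Finset.mem_inter.mpr ⟨hu1, hu.2⟩) w (Finset.mem_inter.mpr ⟨hw1, hw.2⟩)
        · intro c
          rw [hf'card]
          constructor
          · intro hclt
            by_cases hcv : (c : ℕ) < fx.card
            · obtain ⟨u, hu⟩ := (admx.2.1 c).mp hcv
              rw [Finset.mem_inter] at hu
              exact ⟨u, Finset.mem_inter.mpr ⟨Finset.mem_insert.mpr (Or.inr hu.1), hu.2⟩⟩
            · have : c = c1 := Fin.ext (by simp only [hc1]; omega)
              exact ⟨z, Finset.mem_inter.mpr ⟨Finset.mem_insert_self z fx,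
                this ▸ hz.2⟩⟩
          · rintro ⟨u, hu⟩
            rw [Finset.mem_inter, hf', Finset.mem_insert] at hu
            rcases hu.1 with hu1 | hu1
            · have : c = c1 := partF_unique hXc (hu1 ▸ hu.2) hz.2
              rw [this]; simp only [hc1]; omega
            · have : (c : ℕ) < fx.card :=
                (admx.2.1 c).mpr ⟨u, Finset.mem_inter.mpr ⟨hu1, hu.2⟩⟩
              omega
        · intro c c' j j' u w hu hw huj hwj hcc'
          rw [Finset.mem_inter, hf', Finset.mem_insert] at hu hw
          rcases hu.1 with hu1 | hu1 <;> rcases hw.1 with hw1 | hw1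
          · have hji : j = i := partF_unique hem (hu1 ▸ huj) hz.1
            have hji' : j' = i := partF_unique hem (hw1 ▸ hwj) hz.1
            rw [hji, hji']
          · exfalso
            have hcc1 : c = c1 := partF_unique hXc (hu1 ▸ hu.2) hz.2
            have hn : (c' : ℕ) < fx.card :=
              (admx.2.1 c').mpr ⟨w, Finset.mem_inter.mpr ⟨hw1, hw.2⟩⟩
            have := Fin.le_def.mp hcc'
            rw [hcc1] at this
            simp only [hc1] at this
            omega
          · have hji' : j' = i := partF_unique hem (hw1 ▸ hwj) hz.1
            have hcn : (c : ℕ) < fx.card :=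
              (admx.2.1 c).mpr ⟨u, Finset.mem_inter.mpr ⟨hu1, hu.2⟩⟩
            have hca : c ≤ a := Fin.le_def.mpr (by omega)
            have : j ≤ i := admx.2.2 c a j i u x
              (Finset.mem_inter.mpr ⟨hu1, hu.2⟩)
              (Finset.mem_inter.mpr ⟨hxfx, hxa⟩) huj hxi hca
            rw [hji']
            exact this
          · exact admx.2.2 c c' j j' u w (Finset.mem_inter.mpr ⟨hu1, hu.2⟩)
              (Finset.mem_inter.mpr ⟨hw1, hw.2⟩) huj hwj hcc'
      have heq := hmaxx f' hf'adm (Finset.subset_insert z fx)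
      exact hzfx (heq ▸ Finset.mem_insert_self z fx)
    -- the spliced set h
    set h : Finset V := (fy.filter (fun v => colf v ≤ a)) ∪
      (fx.filter (fun v => a < colf v)) with hhdef
    have hinter : ∀ c : Fin d, h ∩ Xc c = if c ≤ a then fy ∩ Xc c else fx ∩ Xc c := by
      intro c
      ext v
      rw [Finset.mem_inter, hhdef, Finset.mem_union, Finset.mem_filter, Finset.mem_filter]
      constructor
      · rintro ⟨hv1 | hv1, hvc⟩
        · have hca : c ≤ a := hcol_eq hvc ▸ hv1.2
          rw [if_pos hca]
          exact Finset.mem_inter.mpr ⟨hv1.1, hvc⟩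
        · have hca : ¬ c ≤ a := not_le.mpr (hcol_eq hvc ▸ hv1.2)
          rw [if_neg hca]
          exact Finset.mem_inter.mpr ⟨hv1.1, hvc⟩
      · intro hv
        by_cases hca : c ≤ a
        · rw [if_pos hca, Finset.mem_inter] at hv
          exact ⟨Or.inl ⟨hv.1, by rw [hcol_eq hv.2]; exact hca⟩, hv.2⟩
        · rw [if_neg hca, Finset.mem_inter] at hv
          exact ⟨Or.inr ⟨hv.1, by rw [hcol_eq hv.2]; exact not_le.mp hca⟩, hv.2⟩
    have hptcard : ∀ c : Fin d, (h ∩ Xc c).card = (fx ∩ Xc c).card := by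
      intro c
      rw [hinter c]
      by_cases hca : c ≤ a
      · rw [if_pos hca]
        have hcan : (c : ℕ) ≤ (a : ℕ) := hca
        rw [adm_inter_card_one admy (by omega), adm_inter_card_one admx (by omega)]
      · rw [if_neg hca]
    have hcardh : h.card = fx.card := by
      rw [card_eq_sum_partsF hXc h, card_eq_sum_partsF hXc fx]
      exact Finset.sum_congr rfl fun c _ => hptcard c
    have hadmh : IsAdmissibleSet Xc em h := by
      refine ⟨?_, ?_, ?_⟩
      · intro c
        rw [hinter c]
        split_ifs
        · exact admy.1 c
        · exact admx.1 c
      · intro c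
        rw [hcardh, hinter c]
        by_cases hca : c ≤ a
        · rw [if_pos hca]
          have hcan : (c : ℕ) ≤ (a : ℕ) := hca
          refine iff_of_true (by omega) ?_
          exact (admy.2.1 c).mp (by omega)
        · rw [if_neg hca]
          exact admx.2.1 c
      · intro c c' j j' u w hu hw huj hwj hcc'
        rw [hinter c] at hu
        rw [hinter c'] at hw
        by_cases hca : c ≤ a <;> by_cases hca' : c' ≤ a
        · rw [if_pos hca] at hu
          rw [if_pos hca'] at hw
          exact admy.2.2 c c' j j' u w hu hw huj hwj hcc'
        · rw [if_pos hca] at hu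
          rw [if_neg hca'] at hw
          have h1 : j ≤ i := admy.2.2 c b j i u y hu
            (Finset.mem_inter.mpr ⟨hyfy, hyb⟩) huj hyi (hca.trans (le_of_lt hab))
          have h2 : i ≤ j' := admx.2.2 a c' i j' x w
            (Finset.mem_inter.mpr ⟨hxfx, hxa⟩) hw hxi hwj (le_of_lt (not_le.mp hca'))
          exact h1.trans h2
        · exact absurd (hcc'.trans hca') hca
        · rw [if_neg hca] at hu
          rw [if_neg hca'] at hw
          exact admx.2.2 c c' j j' u w hu hw huj hwj hcc'
    have hhC : ∀ v ∈ h, v ∉ C := by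
      intro v hv hvC
      rw [hhdef, Finset.mem_union, Finset.mem_filter, Finset.mem_filter] at hv
      rcases hv with ⟨hvfy, hva⟩ | ⟨hvfx, hva⟩
      · have hvy : v = y := hfyC v hvfy hvC
        rw [hvy, hcol_eq hyb] at hva
        exact absurd (lt_of_lt_of_le hab hva) (lt_irrefl a)
      · have hvx : v = x := hfxC v hvfx hvC
        rw [hvx, hcol_eq hxa] at hva
        exact absurd hva (lt_irrefl a)
    -- h is maximal admissible
    have hhmax : ∀ e', IsAdmissibleSet Xc em e' → h ⊆ e' → h = e' := by
      intro e' he' hsub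
      by_contra hne
      have hlt : fx.card < e'.card := by
        rw [← hcardh]
        exact Finset.card_lt_card (ssubset_of_ne_of_subset hne hsub)
      have hkd : fx.card < d := lt_of_lt_of_le hlt (adm_card_le hXc he')
      set cL : Fin d := ⟨fx.card - 1, by omega⟩ with hcL
      obtain ⟨w0, hw0⟩ := (admx.2.1 cL).mp (by simp only [hcL]; omega)
      rw [Finset.mem_inter] at hw0
      have hw0h : w0 ∈ h := by
        rw [hhdef, Finset.mem_union, Finset.mem_filter, Finset.mem_filter]
        refine Or.inr ⟨hw0.1, ?_⟩
        rw [hcol_eq hw0.2]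
        exact Fin.lt_def.mpr (by simp only [hcL]; omega)
      have hw0e' : w0 ∈ e' := hsub hw0h
      set f'' : Finset V := fx ∪ (e'.filter (fun v => fx.card ≤ (colf v : ℕ))) with hf''
      have hint2 : ∀ c : Fin d, f'' ∩ Xc c =
          if (c : ℕ) < fx.card then fx ∩ Xc c else e' ∩ Xc c := by
        intro c
        ext v
        rw [Finset.mem_inter, hf'', Finset.mem_union, Finset.mem_filter]
        constructor
        · rintro ⟨hv1 | hv1, hvc⟩
          · have hcv : (c : ℕ) < fx.card :=
              (admx.2.1 c).mpr ⟨v, Finset.mem_inter.mpr ⟨hv1, hvc⟩⟩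
            rw [if_pos hcv]
            exact Finset.mem_inter.mpr ⟨hv1, hvc⟩
          · have hcv : ¬ (c : ℕ) < fx.card := by
              rw [← hcol_eq hvc]
              omega
            rw [if_neg hcv]
            exact Finset.mem_inter.mpr ⟨hv1.1, hvc⟩
        · intro hv
          by_cases hcv : (c : ℕ) < fx.card
          · rw [if_pos hcv, Finset.mem_inter] at hv
            exact ⟨Or.inl hv.1, hv.2⟩
          · rw [if_neg hcv, Finset.mem_inter] at hv
            exact ⟨Or.inr ⟨hv.1, by rw [hcol_eq hv.2]; omega⟩, hv.2⟩
      have hcard2 : f''.card = e'.card := by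
        rw [card_eq_sum_partsF hXc f'', card_eq_sum_partsF hXc e']
        refine Finset.sum_congr rfl fun c _ => ?_
        rw [hint2 c]
        by_cases hcv : (c : ℕ) < fx.card
        · rw [if_pos hcv, adm_inter_card_one admx hcv,
            adm_inter_card_one he' (by omega)]
        · rw [if_neg hcv]
      have hadm2 : IsAdmissibleSet Xc em f'' := by
        refine ⟨?_, ?_, ?_⟩
        · intro c
          rw [hint2 c]
          split_ifs
          · exact admx.1 c
          · exact he'.1 c
        · intro c
          rw [hcard2, hint2 c]
          by_cases hcv : (c : ℕ) < fx.card
          · rw [if_pos hcv]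
            refine iff_of_true (by omega) ((admx.2.1 c).mp hcv)
          · rw [if_neg hcv]
            exact he'.2.1 c
        · intro c c' j j' u w hu hw huj hwj hcc'
          rw [hint2 c] at hu
          rw [hint2 c'] at hw
          have hccn : (c : ℕ) ≤ (c' : ℕ) := hcc'
          by_cases hcv : (c : ℕ) < fx.card <;> by_cases hcv' : (c' : ℕ) < fx.card
          · rw [if_pos hcv] at hu
            rw [if_pos hcv'] at hw
            exact admx.2.2 c c' j j' u w hu hw huj hwj hcc'
          · rw [if_pos hcv] at hu
            rw [if_neg hcv'] at hw
            obtain ⟨j0, hj0⟩ := hem.2 w0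
            have h1 : j ≤ j0 := admx.2.2 c cL j j0 u w0 hu
              (Finset.mem_inter.mpr ⟨hw0.1, hw0.2⟩) huj hj0
              (Fin.le_def.mpr (by simp only [hcL]; omega))
            have h2 : j0 ≤ j' := he'.2.2 cL c' j0 j' w0 w
              (Finset.mem_inter.mpr ⟨hw0e', hw0.2⟩) hw hj0 hwj
              (Fin.le_def.mpr (by simp only [hcL]; omega))
            exact h1.trans h2
          · omega
          · rw [if_neg hcv] at hu
            rw [if_neg hcv'] at hw
            exact he'.2.2 c c' j j' u w hu hw huj hwj hcc'
      have heq := hmaxx f'' hadm2 Finset.subset_union_left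
      have : fx.card = f''.card := by rw [← heq]
      omega
    -- conclude: h or a column inside h avoids C, contradicting the cover property
    by_cases hcol : ∃ j, em j ⊆ h
    · obtain ⟨j, hj⟩ := hcol
      have hjE : em j ∈ completeAdmissibleClutter Xc em := Or.inl ⟨j, rfl⟩
      obtain ⟨w, hw⟩ := hC.1 (em j) hjE
      rw [Finset.mem_inter] at hw
      exact hhC w (hj hw.1) hw.2
    · push_neg at hcol
      have hhE : h ∈ completeAdmissibleClutter Xc em := Or.inr ⟨hadmh, hcol, hhmax⟩
      obtain ⟨w, hw⟩ := hC.1 h hhE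
      rw [Finset.mem_inter] at hw
      exact hhC w hw.1 hw.2
  obtain ⟨x, hx, y, hy, hxy⟩ := Finset.one_lt_card.mp hcard
  rw [Finset.mem_inter] at hx hy
  have hane : colf x ≠ colf y := by
    intro heq
    refine hxy (Finset.card_le_one.mp ((hadm i).1 (colf x)) x
      (Finset.mem_inter.mpr ⟨hx.2, hcolf x⟩) y
      (Finset.mem_inter.mpr ⟨hy.2, heq ▸ hcolf y⟩))
  rcases lt_or_gt_of_ne hane with hlt | hgt
  · exact main x y (colf x) (colf y) hx.1 hx.2 hy.1 hy.2 (hcolf x) (hcolf y) hlt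
  · exact main y x (colf y) (colf x) hy.1 hy.2 hx.1 hx.2 (hcolf y) (hcolf x) hgt

/-- A complete admissible clutter is unmixed. -/
theorem complete_admissible_clutter_unmixed
    {d g : ℕ} (Xc : Fin d → Finset V) (em : Fin g → Finset V)
    (hXc : IsPartitionF Xc) (hem : IsPartitionF em)
    (hcompat : ∀ i j, (em i ∩ Xc j).card ≤ 1)
    (hadm : ∀ i, IsAdmissibleSet Xc em (em i)) :
    Unmixed (completeAdmissibleClutter Xc em) := by
  intro C D hC hD
  have key : ∀ C : Finset V,
      IsMinimalVertexCover (completeAdmissibleClutter Xc em) C → C.card = g := by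
    intro C hCm
    rw [card_eq_sum_partsF hem C]
    have h1 : ∀ i : Fin g, (C ∩ em i).card = 1 := by
      intro i
      refine le_antisymm (cac_inter_card_le_one hXc hem hadm hCm i) ?_
      have hiE : em i ∈ completeAdmissibleClutter Xc em := Or.inl ⟨i, rfl⟩
      obtain ⟨w, hw⟩ := hCm.1 (em i) hiE
      rw [Finset.mem_inter] at hw
      exact Finset.card_pos.mpr ⟨w, Finset.mem_inter.mpr ⟨hw.2, hw.1⟩⟩
    rw [Finset.sum_congr rfl fun i _ => h1 i]
    simp
  rw [key C hC, key D hD]
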